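/- Generalization bound: Let H be a nonempty set of measurable NE approximators, D a probability measure on U, m ≥ 1, δ ∈ (0,1), r > 0, and suppose C is a nonempty finite set of NE approximators of cardinality K that r-covers H. Assume the function S ↦ sup_{h∈H}(L_D(h) − L_S(h)) on U^m is measurable with respect to the product measure D^m. Then with probability at least 1 − δ over the draw of an i.i.d. sample S = (u^{(1)},…,u^{(m)}) ∼ D^m, every h ∈ H satisfies L_D(h) − L_S(h) ≤ 2·(√(2·ln K / m) + 2r) + 4·√(2·ln(4/δ) / m). -/

import Mathlib

open Finset MeasureTheory

section NashDefs

variable {N : Type*} {A : N → Type*}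

/-- `σ` is a mixed strategy profile: each `σ i` is a probability distribution on `A i`. -/
def IsMixedProfile [∀ i, Fintype (A i)] (σ : ∀ i, A i → ℝ) : Prop :=
  (∀ i a, 0 ≤ σ i a) ∧ ∀ i, ∑ a, σ i a = 1

/-- Expected utility of player `i` when the mixed strategy profile `σ` is played:
`u_i(σ) = ∑_{a ∈ A} (∏_j σ_j(a_j)) u_i(a)`. -/
def expUtil [Fintype N] [DecidableEq N] [∀ i, Fintype (A i)]
    (u : N → (∀ j, A j) → ℝ) (i : N) (σ : ∀ j, A j → ℝ) : ℝ :=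
  ∑ a : ∀ j, A j, (∏ j, σ j (a j)) * u i a

/-- The pure strategy of player `i` playing action `b` with probability one. -/
def pureStrat [∀ i, DecidableEq (A i)] {i : N} (b : A i) : A i → ℝ :=
  fun c => if c = b then 1 else 0

/-- Nash approximation loss:
`NashApr(σ, u) = max_{i ∈ N} max_{b ∈ A_i} [u_i(b, σ_{-i}) - u_i(σ)]`. -/
noncomputable def nashApr [Fintype N] [DecidableEq N] [Nonempty N]
    [∀ i, Fintype (A i)] [∀ i, DecidableEq (A i)] [∀ i, Nonempty (A i)]
    (σ : ∀ i, A i → ℝ) (u : N → (∀ j, A j) → ℝ) : ℝ :=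
  Finset.univ.sup' Finset.univ_nonempty fun i : N =>
    Finset.univ.sup' Finset.univ_nonempty fun b : A i =>
      expUtil u i (Function.update σ i (pureStrat b)) - expUtil u i σ

/-- ℓ1-distance between mixed strategy profiles:
`‖σ - σ'‖₁ = ∑_{i ∈ N} ∑_{a_i ∈ A_i} |σ_i(a_i) - σ'_i(a_i)|`. -/
def dist1 [Fintype N] [∀ i, Fintype (A i)] (σ σ' : ∀ i, A i → ℝ) : ℝ :=
  ∑ i, ∑ a, |σ i a - σ' i a|

/-- ℓmax-distance between game utilities:
`‖u - v‖max = max_{i ∈ N} max_{a ∈ A} |u_i(a) - v_i(a)|`. -/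
noncomputable def distMax [Fintype N] [DecidableEq N] [Nonempty N]
    [∀ i, Fintype (A i)] [∀ i, Nonempty (A i)]
    (u v : N → (∀ j, A j) → ℝ) : ℝ :=
  Finset.univ.sup' Finset.univ_nonempty fun i : N =>
    Finset.univ.sup' Finset.univ_nonempty fun a : ∀ j, A j => |u i a - v i a|

end NashDefs

/-- The set of all game utilities (with values in `[0,1]`) for fixed players `N`
and action space `A`, as a subtype. -/
abbrev GameUtil (N : Type*) (A : N → Type*) : Type _ :=
  {u : N → (∀ j, A j) → ℝ // ∀ i a, u i a ∈ Set.Icc (0 : ℝ) 1}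

/-- An NE approximator maps game utilities to mixed strategy profiles. -/
abbrev NEApprox (N : Type*) (A : N → Type*) [∀ i, Fintype (A i)] : Type _ :=
  {h : GameUtil N A → ∀ i, A i → ℝ // ∀ u, IsMixedProfile (h u)}

section Risk

variable {N : Type*} {A : N → Type*} [Fintype N] [DecidableEq N] [Nonempty N]
  [∀ i, Fintype (A i)] [∀ i, DecidableEq (A i)] [∀ i, Nonempty (A i)]

/-- Nash approximation loss of an NE approximator on a game. -/
noncomputable def nashLoss (h : NEApprox N A) (u : GameUtil N A) : ℝ :=
  nashApr (h.1 u) u.1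

/-- True risk `L_D(h) = E_{u ∼ D}[NashApr(h(u), u)]`. -/
noncomputable def trueRisk (D : Measure (GameUtil N A)) (h : NEApprox N A) : ℝ :=
  ∫ u, nashLoss h u ∂D

/-- Empirical risk `L_S(h) = (1/m) ∑_j NashApr(h(u⁽ʲ⁾), u⁽ʲ⁾)`. -/
noncomputable def empRisk {m : ℕ} (S : Fin m → GameUtil N A) (h : NEApprox N A) : ℝ :=
  (1 / (m : ℝ)) * ∑ j, nashLoss h (S j)

/-- `C` `r`-covers `H` under the `ℓ_{∞,1}`-distance:
every `h ∈ H` is within `ℓ_{∞,1}`-distance `r` of some `g ∈ C`. -/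
def Covers (r : ℝ) (C : Finset (NEApprox N A)) (H : Set (NEApprox N A)) : Prop :=
  ∀ h ∈ H, ∃ g ∈ C, ∀ u, dist1 (h.1 u) (g.1 u) ≤ r

end Risk

section AuxDet
set_option linter.unusedSectionVars false

variable {N : Type*} {A : N → Type*} [Fintype N] [DecidableEq N] [Nonempty N]
  [∀ i, Fintype (A i)] [∀ i, DecidableEq (A i)] [∀ i, Nonempty (A i)]

lemma sum_pi_prod (f : ∀ j, A j → ℝ) :
    ∑ a : ∀ j, A j, ∏ j, f j (a j) = ∏ j, ∑ x, f j x := by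
  rw [Finset.prod_univ_sum]
  rw [Fintype.piFinset_univ]

lemma prod_nonneg_of_mixed {σ : ∀ i, A i → ℝ} (hσ : IsMixedProfile σ) (a : ∀ j, A j) :
    0 ≤ ∏ j, σ j (a j) :=
  Finset.prod_nonneg fun j _ => hσ.1 j (a j)

lemma sum_prod_of_mixed {σ : ∀ i, A i → ℝ} (hσ : IsMixedProfile σ) :
    ∑ a : ∀ j, A j, ∏ j, σ j (a j) = 1 := by
  rw [sum_pi_prod]
  simp [hσ.2]

lemma expUtil_mem {u : N → (∀ j, A j) → ℝ} (hu : ∀ i a, u i a ∈ Set.Icc (0:ℝ) 1)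
    {σ : ∀ i, A i → ℝ} (hσ : IsMixedProfile σ) (i : N) :
    expUtil u i σ ∈ Set.Icc (0:ℝ) 1 := by
  constructor
  · exact Finset.sum_nonneg fun a _ =>
      mul_nonneg (prod_nonneg_of_mixed hσ a) (hu i a).1
  · calc ∑ a : ∀ j, A j, (∏ j, σ j (a j)) * u i a
        ≤ ∑ a : ∀ j, A j, (∏ j, σ j (a j)) * 1 :=
          Finset.sum_le_sum fun a _ =>
            mul_le_mul_of_nonneg_left (hu i a).2 (prod_nonneg_of_mixed hσ a)
      _ = 1 := by simpa using sum_prod_of_mixed hσ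

lemma isMixed_update {σ : ∀ i, A i → ℝ} (hσ : IsMixedProfile σ) (i : N) (b : A i) :
    IsMixedProfile (Function.update σ i (pureStrat b)) := by
  constructor
  · intro j a
    rcases eq_or_ne j i with rfl | hj
    · simp only [Function.update_self, pureStrat]
      split <;> norm_num
    · rw [Function.update_of_ne hj]; exact hσ.1 j a
  · intro j
    rcases eq_or_ne j i with rfl | hj
    · simp [Function.update_self, pureStrat]
    · rw [Function.update_of_ne hj]; exact hσ.2 j

lemma nashApr_mem {σ : ∀ i, A i → ℝ} (hσ : IsMixedProfile σ)
    {u : N → (∀ j, A j) → ℝ} (hu : ∀ i a, u i a ∈ Set.Icc (0:ℝ) 1) :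
    nashApr σ u ∈ Set.Icc (-1:ℝ) 1 := by
  constructor
  · obtain ⟨i⟩ := (inferInstance : Nonempty N)
    obtain ⟨b⟩ := (inferInstance : Nonempty (A i))
    have h1 : expUtil u i (Function.update σ i (pureStrat b)) - expUtil u i σ ≥ -1 := by
      have := (expUtil_mem hu (isMixed_update hσ i b) i).1
      have := (expUtil_mem hu hσ i).2
      linarith
    have h2 : expUtil u i (Function.update σ i (pureStrat b)) - expUtil u i σ ≤ nashApr σ u :=
      le_trans
        (Finset.le_sup' (fun b : A i =>
          expUtil u i (Function.update σ i (pureStrat b)) - expUtil u i σ) (Finset.mem_univ b))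
        (Finset.le_sup' (fun i : N => Finset.univ.sup' Finset.univ_nonempty fun b : A i =>
          expUtil u i (Function.update σ i (pureStrat b)) - expUtil u i σ) (Finset.mem_univ i))
    linarith
  · refine Finset.sup'_le _ _ fun i _ => Finset.sup'_le _ _ fun b _ => ?_
    have := (expUtil_mem hu (isMixed_update hσ i b) i).2
    have := (expUtil_mem hu hσ i).1
    linarith

end AuxDet
section AuxLip
set_option linter.unusedSectionVars false

variable {N : Type*} {A : N → Type*} [Fintype N] [DecidableEq N] [Nonempty N]
  [∀ i, Fintype (A i)] [∀ i, DecidableEq (A i)] [∀ i, Nonempty (A i)]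

lemma exp_sum_step {σ σ' : ∀ i, A i → ℝ} (hσ : IsMixedProfile σ) (hσ' : IsMixedProfile σ')
    {v : (∀ j, A j) → ℝ} (hv : ∀ a, v a ∈ Set.Icc (0:ℝ) 1)
    (s : Finset N) (i : N) (hi : i ∉ s) :
    |(∑ a : ∀ j, A j, (∏ j, (if j ∈ insert i s then σ j else σ' j) (a j)) * v a)
      - ∑ a : ∀ j, A j, (∏ j, (if j ∈ s then σ j else σ' j) (a j)) * v a|
      ≤ (1/2) * ∑ b, |σ i b - σ' i b| := by
  set q : ∀ j, A j → ℝ := fun j => if j ∈ s then σ j else σ' j with hq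
  set W : (∀ j, A j) → ℝ := fun a => ∏ j ∈ Finset.univ.erase i, q j (a j) with hW
  have hWnonneg : ∀ a, 0 ≤ W a := by
    intro a
    refine Finset.prod_nonneg fun j _ => ?_
    by_cases hj : j ∈ s <;> simp [hq, hj, hσ.1 j (a j), hσ'.1 j (a j)]
  have h1 : ∀ a : ∀ j, A j,
      (∏ j, (if j ∈ insert i s then σ j else σ' j) (a j)) = σ i (a i) * W a := by
    intro a
    rw [← Finset.mul_prod_erase Finset.univ _ (Finset.mem_univ i)]
    congr 1
    · simp
    · refine Finset.prod_congr rfl fun j hj => ?_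
      have hji : j ≠ i := Finset.ne_of_mem_erase hj
      simp [hq, Finset.mem_insert, hji]
  have h2 : ∀ a : ∀ j, A j, (∏ j, q j (a j)) = σ' i (a i) * W a := by
    intro a
    rw [← Finset.mul_prod_erase Finset.univ _ (Finset.mem_univ i)]
    congr 1
    simp [hq, hi]
  -- rewrite the difference
  have hdiff : (∑ a : ∀ j, A j, (∏ j, (if j ∈ insert i s then σ j else σ' j) (a j)) * v a)
      - (∑ a : ∀ j, A j, (∏ j, q j (a j)) * v a)
      = ∑ a : ∀ j, A j, (σ i (a i) - σ' i (a i)) * W a * v a := by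
    rw [← Finset.sum_sub_distrib]
    refine Finset.sum_congr rfl fun a _ => ?_
    rw [h1 a, h2 a]; ring
  -- the key cancellation: ∑_a (σ i - σ' i)(a i) * W a = 0
  have key1 : ∑ a : ∀ j, A j, (σ i (a i) - σ' i (a i)) * W a = 0 := by
    set r : ∀ j, A j → ℝ := Function.update q i (fun x => σ i x - σ' i x) with hr
    have hra : ∀ a : ∀ j, A j, (σ i (a i) - σ' i (a i)) * W a = ∏ j, r j (a j) := by
      intro a
      rw [← Finset.mul_prod_erase Finset.univ (fun j => r j (a j)) (Finset.mem_univ i)]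
      congr 1
      · simp [hr]
      · refine Finset.prod_congr rfl fun j hj => ?_
        rw [hr, Function.update_of_ne (Finset.ne_of_mem_erase hj)]
    simp_rw [hra]
    rw [sum_pi_prod]
    refine Finset.prod_eq_zero (Finset.mem_univ i) ?_
    simp [hr, Finset.sum_sub_distrib, hσ.2 i, hσ'.2 i]
  -- total mass: ∑_a |σ i - σ' i|(a i) * W a = ∑_b |σ i b - σ' i b|
  have key2 : ∑ a : ∀ j, A j, |σ i (a i) - σ' i (a i)| * W a = ∑ b, |σ i b - σ' i b| := by
    set r : ∀ j, A j → ℝ := Function.update q i (fun x => |σ i x - σ' i x|) with hr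
    have hra : ∀ a : ∀ j, A j, |σ i (a i) - σ' i (a i)| * W a = ∏ j, r j (a j) := by
      intro a
      rw [← Finset.mul_prod_erase Finset.univ (fun j => r j (a j)) (Finset.mem_univ i)]
      congr 1
      · simp [hr]
      · refine Finset.prod_congr rfl fun j hj => ?_
        rw [hr, Function.update_of_ne (Finset.ne_of_mem_erase hj)]
    simp_rw [hra]
    rw [sum_pi_prod]
    rw [← Finset.mul_prod_erase Finset.univ (fun j => ∑ x, r j x) (Finset.mem_univ i)]
    have : ∀ j ∈ Finset.univ.erase i, ∑ x, r j x = 1 := by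
      intro j hj
      rw [hr]
      rw [Function.update_of_ne (Finset.ne_of_mem_erase hj)]
      by_cases hjs : j ∈ s <;> simp [hq, hjs, hσ.2 j, hσ'.2 j]
    rw [Finset.prod_congr rfl this]
    simp [hr]
  -- split v a = (v a - 1/2) + 1/2
  have hsplit : ∑ a : ∀ j, A j, (σ i (a i) - σ' i (a i)) * W a * v a
      = ∑ a : ∀ j, A j, (σ i (a i) - σ' i (a i)) * W a * (v a - 1/2) := by
    have : ∀ a : ∀ j, A j, (σ i (a i) - σ' i (a i)) * W a * v a
        = (σ i (a i) - σ' i (a i)) * W a * (v a - 1/2)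
          + (1/2) * ((σ i (a i) - σ' i (a i)) * W a) := by intro a; ring
    rw [Finset.sum_congr rfl fun a _ => this a, Finset.sum_add_distrib,
      ← Finset.mul_sum, key1]
    ring
  rw [hdiff, hsplit]
  calc |∑ a : ∀ j, A j, (σ i (a i) - σ' i (a i)) * W a * (v a - 1/2)|
      ≤ ∑ a : ∀ j, A j, |(σ i (a i) - σ' i (a i)) * W a * (v a - 1/2)| :=
        Finset.abs_sum_le_sum_abs _ _
    _ ≤ ∑ a : ∀ j, A j, |σ i (a i) - σ' i (a i)| * W a * (1/2) := by
        refine Finset.sum_le_sum fun a _ => ?_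
        rw [abs_mul, abs_mul, abs_of_nonneg (hWnonneg a)]
        refine mul_le_mul_of_nonneg_left ?_
          (mul_nonneg (abs_nonneg _) (hWnonneg a))
        rw [abs_le]
        have := (hv a).1; have := (hv a).2
        constructor <;> linarith
    _ = (1/2) * ∑ b, |σ i b - σ' i b| := by
        rw [← key2, Finset.mul_sum]
        exact Finset.sum_congr rfl fun a _ => by ring

lemma expUtil_lipschitz {σ σ' : ∀ i, A i → ℝ} (hσ : IsMixedProfile σ) (hσ' : IsMixedProfile σ')
    {u : N → (∀ j, A j) → ℝ} (hu : ∀ i a, u i a ∈ Set.Icc (0:ℝ) 1) (i : N) :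
    |expUtil u i σ - expUtil u i σ'| ≤ (1/2) * dist1 σ σ' := by
  set G : Finset N → ℝ := fun s =>
    ∑ a : ∀ j, A j, (∏ j, (if j ∈ s then σ j else σ' j) (a j)) * u i a with hG
  have main : ∀ s : Finset N, |G s - G ∅| ≤ (1/2) * ∑ j ∈ s, ∑ b, |σ j b - σ' j b| := by
    intro s
    induction s using Finset.induction with
    | empty => simp
    | @insert k s hk ih =>
      calc |G (insert k s) - G ∅| ≤ |G (insert k s) - G s| + |G s - G ∅| := abs_sub_le _ _ _
        _ ≤ (1/2) * ∑ b, |σ k b - σ' k b| + (1/2) * ∑ j ∈ s, ∑ b, |σ j b - σ' j b| := by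
            have := exp_sum_step hσ hσ' (fun a => hu i a) s k hk
            exact add_le_add this ih
        _ = (1/2) * ∑ j ∈ insert k s, ∑ b, |σ j b - σ' j b| := by
            rw [Finset.sum_insert hk]; ring
  have huniv : G Finset.univ = expUtil u i σ := by
    simp [hG, expUtil]
  have hempty : G ∅ = expUtil u i σ' := by
    simp [hG, expUtil]
  have := main Finset.univ
  rw [huniv, hempty] at this
  exact this

end AuxLip
section AuxLip2
set_option linter.unusedSectionVars false

variable {N : Type*} {A : N → Type*} [Fintype N] [DecidableEq N] [Nonempty N]
  [∀ i, Fintype (A i)] [∀ i, DecidableEq (A i)] [∀ i, Nonempty (A i)]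

lemma dist1_nonneg (σ σ' : ∀ i, A i → ℝ) : 0 ≤ dist1 σ σ' :=
  Finset.sum_nonneg fun _ _ => Finset.sum_nonneg fun _ _ => abs_nonneg _

lemma dist1_symm (σ σ' : ∀ i, A i → ℝ) : dist1 σ σ' = dist1 σ' σ := by
  unfold dist1
  refine Finset.sum_congr rfl fun i _ => Finset.sum_congr rfl fun a _ => abs_sub_comm _ _

lemma dist1_triangle (σ τ σ' : ∀ i, A i → ℝ) : dist1 σ σ' ≤ dist1 σ τ + dist1 τ σ' := by
  unfold dist1
  rw [← Finset.sum_add_distrib]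
  refine Finset.sum_le_sum fun i _ => ?_
  rw [← Finset.sum_add_distrib]
  exact Finset.sum_le_sum fun a _ => abs_sub_le _ _ _

lemma dist1_update_le (σ σ' : ∀ i, A i → ℝ) (i : N) (b : A i) :
    dist1 (Function.update σ i (pureStrat b)) (Function.update σ' i (pureStrat b))
      ≤ dist1 σ σ' := by
  unfold dist1
  refine Finset.sum_le_sum fun j _ => ?_
  rcases eq_or_ne j i with rfl | hj
  · simp only [Function.update_self, sub_self, abs_zero, Finset.sum_const_zero]
    exact Finset.sum_nonneg fun a _ => abs_nonneg _
  · rw [Function.update_of_ne hj, Function.update_of_ne hj]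

lemma nashApr_lipschitz_le {σ σ' : ∀ i, A i → ℝ} (hσ : IsMixedProfile σ)
    (hσ' : IsMixedProfile σ')
    {u : N → (∀ j, A j) → ℝ} (hu : ∀ i a, u i a ∈ Set.Icc (0:ℝ) 1) :
    nashApr σ u ≤ nashApr σ' u + dist1 σ σ' := by
  refine Finset.sup'_le _ _ fun i _ => Finset.sup'_le _ _ fun b _ => ?_
  have hterm : expUtil u i (Function.update σ i (pureStrat b)) - expUtil u i σ
      ≤ (expUtil u i (Function.update σ' i (pureStrat b)) - expUtil u i σ') + dist1 σ σ' := by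
    have l1 := expUtil_lipschitz (isMixed_update hσ i b) (isMixed_update hσ' i b) hu i
    have l2 := expUtil_lipschitz hσ' hσ hu i
    have l3 := dist1_update_le σ σ' i b
    have l4 := dist1_symm σ σ'
    rw [abs_le] at l1 l2
    have := l1.2; have := l2.2
    nlinarith [dist1_nonneg σ σ']
  refine le_trans hterm ?_
  have h2 : expUtil u i (Function.update σ' i (pureStrat b)) - expUtil u i σ' ≤ nashApr σ' u :=
    le_trans
      (Finset.le_sup' (fun b : A i =>
        expUtil u i (Function.update σ' i (pureStrat b)) - expUtil u i σ') (Finset.mem_univ b))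
      (Finset.le_sup' (fun i : N => Finset.univ.sup' Finset.univ_nonempty fun b : A i =>
        expUtil u i (Function.update σ' i (pureStrat b)) - expUtil u i σ') (Finset.mem_univ i))
  linarith

lemma nashLoss_mem (h : NEApprox N A) (u : GameUtil N A) :
    nashLoss h u ∈ Set.Icc (-1:ℝ) 1 :=
  nashApr_mem (h.2 u) u.2

lemma abs_nashLoss_le (h : NEApprox N A) (u : GameUtil N A) : |nashLoss h u| ≤ 1 := by
  have := nashLoss_mem h u
  rw [abs_le]; exact ⟨this.1, this.2⟩

lemma nashLoss_lipschitz (h h' : NEApprox N A) (u : GameUtil N A) {c : ℝ}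
    (hc : ∀ v, dist1 (h.1 v) (h'.1 v) ≤ c) :
    |nashLoss h u - nashLoss h' u| ≤ c := by
  rw [abs_sub_le_iff]
  constructor
  · have := nashApr_lipschitz_le (h.2 u) (h'.2 u) u.2
    have := hc u
    unfold nashLoss; linarith
  · have := nashApr_lipschitz_le (h'.2 u) (h.2 u) u.2
    have h2 := hc u
    rw [dist1_symm] at h2
    unfold nashLoss; linarith

end AuxLip2
section AuxProb
set_option linter.unusedSectionVars false

lemma exp_quad {y : ℝ} (hy : y ≤ 1) : Real.exp y ≤ 1 + y + y ^ 2 := by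
  by_cases hy1 : |y| ≤ 1
  · have hb := Real.exp_bound hy1 (n := 2) (by norm_num)
    have hsum : ∑ m ∈ Finset.range 2, y ^ m / m.factorial = 1 + y := by
      simp [Finset.sum_range_succ]
    rw [hsum, sq_abs] at hb
    norm_num [Nat.factorial] at hb
    have := (abs_le.1 hb).2
    nlinarith [sq_nonneg y]
  · push_neg at hy1
    have hylt : y < -1 := by
      rcases lt_abs.mp hy1 with h1 | h2
      · linarith
      · linarith
    have h1 : Real.exp y ≤ 1 := by
      rw [← Real.exp_zero]
      exact Real.exp_le_exp.2 (by linarith)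
    nlinarith [sq_nonneg (1 + y)]

variable {X : Type*} [MeasurableSpace X] (D : Measure X) [IsProbabilityMeasure D]

lemma integrable_of_bounded {f : X → ℝ} (hf : Measurable f) {c : ℝ} (hc : ∀ x, |f x| ≤ c) :
    Integrable f D :=
  (integrable_const c).mono' hf.aestronglyMeasurable
    (Filter.Eventually.of_forall fun x => by simpa [Real.norm_eq_abs] using hc x)

lemma abs_integral_le {f : X → ℝ} {c : ℝ} (hc0 : 0 ≤ c) (hc : ∀ x, |f x| ≤ c) :
    |∫ x, f x ∂D| ≤ c := by
  have := norm_integral_le_of_norm_le_const (μ := D) (f := f) (C := c)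
    (Filter.Eventually.of_forall fun x => by simpa [Real.norm_eq_abs] using hc x)
  simpa [Real.norm_eq_abs] using this

/-- mgf-type bound for a centered variable bounded by 2, with second moment ≤ 1. -/
lemma mgf_bound {f : X → ℝ} (hf : Measurable f) (hbd : ∀ x, |f x| ≤ 2)
    (hmean : ∫ x, f x ∂D = 0) (hvar : ∫ x, f x ^ 2 ∂D ≤ 1)
    {l : ℝ} (hl0 : 0 ≤ l) (hl : l ≤ 1/2) :
    ∫ x, Real.exp (l * f x) ∂D ≤ Real.exp (l ^ 2) := by
  have hint1 : Integrable f D := integrable_of_bounded D hf (c := 2) hbd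
  have hint2 : Integrable (fun x => f x ^ 2) D := by
    refine integrable_of_bounded D (hf.pow_const 2) (c := 4) fun x => ?_
    rw [abs_of_nonneg (sq_nonneg (f x))]
    nlinarith [(abs_le.1 (hbd x)).1, (abs_le.1 (hbd x)).2]
  have hintexp : Integrable (fun x => Real.exp (l * f x)) D := by
    refine integrable_of_bounded D ((hf.const_mul l).exp) (c := Real.exp 1) fun x => ?_
    rw [abs_of_nonneg (Real.exp_pos _).le]
    refine Real.exp_le_exp.2 ?_
    have := (abs_le.1 (hbd x)).2
    nlinarith [(abs_le.1 (hbd x)).1]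
  have hptw : ∀ x, Real.exp (l * f x) ≤ 1 + l * f x + l ^ 2 * f x ^ 2 := by
    intro x
    have h1 : l * f x ≤ 1 := by
      have := (abs_le.1 (hbd x)).2
      nlinarith
    have := exp_quad h1
    calc Real.exp (l * f x) ≤ 1 + l * f x + (l * f x) ^ 2 := this
      _ = 1 + l * f x + l ^ 2 * f x ^ 2 := by ring
  calc ∫ x, Real.exp (l * f x) ∂D
      ≤ ∫ x, (1 + l * f x + l ^ 2 * f x ^ 2) ∂D := by
        refine integral_mono hintexp ?_ hptw
        exact ((integrable_const 1).add (hint1.const_mul l)).add (hint2.const_mul (l^2))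
    _ = 1 + l * ∫ x, f x ∂D + l ^ 2 * ∫ x, f x ^ 2 ∂D := by
        have hA : Integrable (fun x => 1 + l * f x) D :=
          (integrable_const 1).add (hint1.const_mul l)
        have hB : Integrable (fun x => l ^ 2 * f x ^ 2) D := hint2.const_mul (l^2)
        rw [integral_add hA hB, integral_add (integrable_const 1) (hint1.const_mul l),
          MeasureTheory.integral_const_mul, MeasureTheory.integral_const_mul]
        simp
    _ ≤ 1 + l ^ 2 := by rw [hmean]; nlinarith [sq_nonneg l]
    _ ≤ Real.exp (l ^ 2) := by
        have := Real.add_one_le_exp (l ^ 2); linarith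

/-- Fubini for a power of a single function over a finite product of a probability measure. -/
lemma integral_pi_prod (m : ℕ) (φ : X → ℝ) :
    ∫ S : Fin m → X, ∏ j, φ (S j) ∂(MeasureTheory.Measure.pi fun _ : Fin m => D)
      = (∫ x, φ x ∂D) ^ m := by
  letI : MeasureSpace X := { volume := D }
  haveI : SigmaFinite (volume : Measure X) := by
    show SigmaFinite D; infer_instance
  have h : (MeasureTheory.Measure.pi fun _ : Fin m => D)
      = (volume : Measure (Fin m → X)) := rfl
  rw [h]
  have := MeasureTheory.integral_fintype_prod_volume_eq_pow (𝕜 := ℝ) (ι := Fin m) φ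
  rw [Fintype.card_fin] at this
  exact this

end AuxProb
section Chernoff
set_option linter.unusedSectionVars false

variable {N : Type*} {A : N → Type*} [Fintype N] [DecidableEq N] [Nonempty N]
  [∀ i, Fintype (A i)] [∀ i, DecidableEq (A i)] [∀ i, Nonempty (A i)]

lemma trueRisk_abs_le (D : Measure (GameUtil N A)) [IsProbabilityMeasure D]
    (g : NEApprox N A) : |trueRisk D g| ≤ 1 :=
  abs_integral_le D zero_le_one (abs_nashLoss_le g)

lemma empRisk_mem {m : ℕ} (hm : 1 ≤ m) (S : Fin m → GameUtil N A) (g : NEApprox N A) :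
    empRisk S g ∈ Set.Icc (-1:ℝ) 1 := by
  have hm0 : (0:ℝ) < m := by exact_mod_cast hm
  have hlo : -(m:ℝ) ≤ ∑ j, nashLoss g (S j) := by
    calc -(m:ℝ) = ∑ _j : Fin m, (-1:ℝ) := by simp
      _ ≤ ∑ j, nashLoss g (S j) := Finset.sum_le_sum fun j _ => (nashLoss_mem g (S j)).1
  have hhi : ∑ j, nashLoss g (S j) ≤ (m:ℝ) := by
    calc ∑ j, nashLoss g (S j) ≤ ∑ _j : Fin m, (1:ℝ) :=
        Finset.sum_le_sum fun j _ => (nashLoss_mem g (S j)).2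
      _ = (m:ℝ) := by simp
  have hinv : (0:ℝ) ≤ 1/(m:ℝ) := by positivity
  unfold empRisk
  constructor
  · have h := mul_le_mul_of_nonneg_left hlo hinv
    have he : (1/(m:ℝ)) * (-(m:ℝ)) = -1 := by field_simp
    linarith
  · have h := mul_le_mul_of_nonneg_left hhi hinv
    have he : (1/(m:ℝ)) * (m:ℝ) = 1 := by field_simp
    linarith

lemma empRisk_measurable (D : Measure (GameUtil N A)) {m : ℕ} (g : NEApprox N A)
    (hgmeas : Measurable (nashLoss g)) :
    Measurable fun S : Fin m → GameUtil N A => empRisk S g := by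
  unfold empRisk
  exact (Finset.measurable_sum Finset.univ fun j _ =>
    hgmeas.comp (measurable_pi_apply j)).const_mul _

lemma chernoff_bound (D : Measure (GameUtil N A)) [IsProbabilityMeasure D]
    (g : NEApprox N A) (hgmeas : Measurable (nashLoss g))
    {m : ℕ} (hm : 1 ≤ m) {t l : ℝ} (hl0 : 0 ≤ l) (hl : l ≤ 1/2) :
    (MeasureTheory.Measure.pi fun _ : Fin m => D)
      {S : Fin m → GameUtil N A | t < trueRisk D g - empRisk S g}
      ≤ ENNReal.ofReal (Real.exp ((m:ℝ) * l ^ 2 - l * ((m:ℝ) * t))) := by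
  set ν := MeasureTheory.Measure.pi fun _ : Fin m => D with hνdef
  haveI : IsProbabilityMeasure ν := by
    rw [hνdef]; infer_instance
  have hm0 : (0:ℝ) < m := by exact_mod_cast hm
  set Y : GameUtil N A → ℝ := fun u => trueRisk D g - nashLoss g u with hYdef
  have hYmeas : Measurable Y := measurable_const.sub hgmeas
  have htr := trueRisk_abs_le D g
  have hYbd : ∀ u, |Y u| ≤ 2 := by
    intro u
    have h1 := abs_le.1 htr
    have h2 := abs_le.1 (abs_nashLoss_le g u)
    rw [abs_le]
    constructor <;> simp only [hYdef] <;> linarith [h1.1, h1.2, h2.1, h2.2]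
  have hint : Integrable (nashLoss g) D := integrable_of_bounded D hgmeas (abs_nashLoss_le g)
  have hmean : ∫ u, Y u ∂D = 0 := by
    simp only [hYdef]
    rw [integral_sub (integrable_const _) hint, integral_const]
    simp [trueRisk]
  have hint2 : Integrable (fun u => nashLoss g u ^ 2) D := by
    refine integrable_of_bounded D (hgmeas.pow_const 2) (c := 1) fun u => ?_
    rw [abs_of_nonneg (sq_nonneg _)]
    nlinarith [(abs_le.1 (abs_nashLoss_le g u)).1, (abs_le.1 (abs_nashLoss_le g u)).2]
  have hvar : ∫ u, Y u ^ 2 ∂D ≤ 1 := by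
    have hcong : ∀ u, Y u ^ 2
        = trueRisk D g ^ 2 - 2 * trueRisk D g * nashLoss g u + nashLoss g u ^ 2 := by
      intro u; simp only [hYdef]; ring
    have hA : Integrable (fun u => trueRisk D g ^ 2 - 2 * trueRisk D g * nashLoss g u) D :=
      (integrable_const _).sub (hint.const_mul _)
    have hX2 : ∫ u, nashLoss g u ^ 2 ∂D ≤ 1 := by
      calc ∫ u, nashLoss g u ^ 2 ∂D ≤ ∫ _u, (1:ℝ) ∂D := by
            refine integral_mono hint2 (integrable_const 1) fun u => ?_
            nlinarith [(abs_le.1 (abs_nashLoss_le g u)).1, (abs_le.1 (abs_nashLoss_le g u)).2]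
        _ = 1 := by simp
    calc ∫ u, Y u ^ 2 ∂D
        = ∫ u, (trueRisk D g ^ 2 - 2 * trueRisk D g * nashLoss g u + nashLoss g u ^ 2) ∂D :=
          integral_congr_ae (Filter.Eventually.of_forall fun u => hcong u)
      _ = trueRisk D g ^ 2 - 2 * trueRisk D g * (∫ u, nashLoss g u ∂D)
            + ∫ u, nashLoss g u ^ 2 ∂D := by
          rw [integral_add hA hint2, integral_sub (integrable_const _) (hint.const_mul _),
            MeasureTheory.integral_const_mul, integral_const]
          simp
      _ = - trueRisk D g ^ 2 + ∫ u, nashLoss g u ^ 2 ∂D := by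
          rw [show (∫ u, nashLoss g u ∂D) = trueRisk D g from rfl]; ring
      _ ≤ 1 := by nlinarith [sq_nonneg (trueRisk D g)]
  have hmgf := mgf_bound D hYmeas hYbd hmean hvar hl0 hl
  -- the test function
  set f : (Fin m → GameUtil N A) → ℝ := fun S => Real.exp (∑ j, l * Y (S j)) with hfdef
  have hfprod : ∀ S, f S = ∏ j, Real.exp (l * Y (S j)) := by
    intro S; simp only [hfdef]; rw [Real.exp_sum]
  have hfmeas : Measurable f :=
    (Finset.measurable_sum Finset.univ fun j _ =>
      ((hYmeas.comp (measurable_pi_apply j)).const_mul l)).exp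
  have hfnn : ∀ S, 0 ≤ f S := fun S => (Real.exp_pos _).le
  have hfint : Integrable f ν := by
    refine integrable_of_bounded ν hfmeas (c := Real.exp m) fun S => ?_
    rw [abs_of_nonneg (hfnn S)]
    refine Real.exp_le_exp.2 ?_
    calc ∑ j, l * Y (S j) ≤ ∑ _j : Fin m, (1:ℝ) := by
          refine Finset.sum_le_sum fun j _ => ?_
          have := (abs_le.1 (hYbd (S j))).2
          nlinarith
      _ = (m:ℝ) := by simp
  -- event inclusion
  have hsub : {S : Fin m → GameUtil N A | t < trueRisk D g - empRisk S g}
      ⊆ {S | Real.exp (l * ((m:ℝ) * t)) ≤ f S} := by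
    intro S hS
    simp only [Set.mem_setOf_eq] at hS ⊢
    simp only [hfdef]
    refine Real.exp_le_exp.2 ?_
    have hsumY : ∑ j, l * Y (S j) = l * ((m:ℝ) * (trueRisk D g - empRisk S g)) := by
      rw [← Finset.mul_sum]
      congr 1
      simp only [hYdef, Finset.sum_sub_distrib, Finset.sum_const, Finset.card_univ,
        Fintype.card_fin, nsmul_eq_mul]
      unfold empRisk
      field_simp
    rw [hsumY]
    have h1 : (m:ℝ) * t ≤ (m:ℝ) * (trueRisk D g - empRisk S g) :=
      mul_le_mul_of_nonneg_left hS.le hm0.le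
    exact mul_le_mul_of_nonneg_left h1 hl0
  -- Markov
  have hmarkov := mul_meas_ge_le_integral_of_nonneg (μ := ν)
    (Filter.Eventually.of_forall hfnn) hfint (Real.exp (l * ((m:ℝ) * t)))
  have hintf : ∫ S, f S ∂ν ≤ Real.exp ((m:ℝ) * l ^ 2) := by
    have heq : ∫ S, f S ∂ν = (∫ u, Real.exp (l * Y u) ∂D) ^ m := by
      rw [show f = fun S => ∏ j, Real.exp (l * Y (S j)) from funext hfprod, hνdef]
      exact integral_pi_prod D m fun u => Real.exp (l * Y u)
    rw [heq]
    calc (∫ u, Real.exp (l * Y u) ∂D) ^ m ≤ (Real.exp (l ^ 2)) ^ m := by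
          refine pow_le_pow_left₀ ?_ hmgf m
          exact integral_nonneg fun u => (Real.exp_pos _).le
      _ = Real.exp ((m:ℝ) * l ^ 2) := by
          rw [← Real.exp_nat_mul]
  refine le_trans (measure_mono hsub) ?_
  have hne : ν {S | Real.exp (l * ((m:ℝ) * t)) ≤ f S} ≠ ⊤ := measure_ne_top ν _
  rw [ENNReal.le_ofReal_iff_toReal_le hne (Real.exp_nonneg _)]
  have hεpos : (0:ℝ) < Real.exp (l * ((m:ℝ) * t)) := Real.exp_pos _
  rw [← le_div_iff₀' hεpos] at hmarkov
  refine le_trans hmarkov ?_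
  rw [div_le_iff₀ hεpos]
  calc ∫ S, f S ∂ν ≤ Real.exp ((m:ℝ) * l ^ 2) := hintf
    _ = Real.exp ((m:ℝ) * l ^ 2 - l * ((m:ℝ) * t)) * Real.exp (l * ((m:ℝ) * t)) := by
        rw [← Real.exp_add]; ring_nf

end Chernoff
section Arith

lemma final_arith {K m : ℕ} (hK1 : 1 ≤ K) (hm : 1 ≤ m) {δ : ℝ} (hδ0 : 0 < δ) (hδ1 : δ < 1)
    {t : ℝ}
    (ht : t = 2 * Real.sqrt (2 * Real.log K / m) + 4 * Real.sqrt (2 * Real.log (4/δ) / m)) :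
    (K:ℝ) * Real.exp ((m:ℝ) * (t/4) ^ 2 - (t/4) * ((m:ℝ) * t)) ≤ δ := by
  have hm0 : (0:ℝ) < m := by exact_mod_cast hm
  have hKpos : (0:ℝ) < K := by exact_mod_cast hK1
  have hlogK : 0 ≤ Real.log K := Real.log_nonneg (by exact_mod_cast hK1)
  have hL : 0 < Real.log (4/δ) := Real.log_pos (by rw [lt_div_iff₀ hδ0]; linarith)
  set a := Real.sqrt (2 * Real.log K / m) with hadef
  set b := Real.sqrt (2 * Real.log (4/δ) / m) with hbdef
  have ha0 : 0 ≤ a := Real.sqrt_nonneg _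
  have hb0 : 0 ≤ b := Real.sqrt_nonneg _
  have ha2 : a ^ 2 = 2 * Real.log K / m := Real.sq_sqrt (by positivity)
  have hb2 : b ^ 2 = 2 * Real.log (4/δ) / m := Real.sq_sqrt (by positivity)
  have hma : (m:ℝ) * a ^ 2 = 2 * Real.log K := by rw [ha2]; field_simp
  have hmb : (m:ℝ) * b ^ 2 = 2 * Real.log (4/δ) := by rw [hb2]; field_simp
  have hmt2 : 8 * Real.log K + 32 * Real.log (4/δ) ≤ (m:ℝ) * t ^ 2 := by
    have ht2 : 4 * a ^ 2 + 16 * b ^ 2 ≤ t ^ 2 := by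
      rw [ht]; nlinarith [mul_nonneg ha0 hb0]
    nlinarith
  have hlog1δ : Real.log δ⁻¹ ≤ Real.log (4/δ) := by
    refine Real.log_le_log (by positivity) ?_
    rw [div_eq_mul_inv]
    nlinarith [inv_pos.2 hδ0]
  have harg : (m:ℝ) * (t/4) ^ 2 - (t/4) * ((m:ℝ) * t) ≤ -(Real.log K + Real.log δ⁻¹) := by
    nlinarith
  calc (K:ℝ) * Real.exp ((m:ℝ) * (t/4) ^ 2 - (t/4) * ((m:ℝ) * t))
      ≤ (K:ℝ) * Real.exp (-(Real.log K + Real.log δ⁻¹)) :=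
        mul_le_mul_of_nonneg_left (Real.exp_le_exp.2 harg) (by positivity)
    _ = δ := by
        rw [Real.exp_neg, Real.exp_add, Real.exp_log hKpos, Real.exp_log (by positivity)]
        field_simp

end Arith
theorem generalization_bound
    {N : Type*} [Fintype N] [DecidableEq N] [Nonempty N]
    {A : N → Type*} [∀ i, Fintype (A i)] [∀ i, DecidableEq (A i)] [∀ i, Nonempty (A i)]
    (H : Set (NEApprox N A)) (hH : H.Nonempty)
    (hHmeas : ∀ h ∈ H, Measurable (nashLoss h))
    (D : Measure (GameUtil N A)) [IsProbabilityMeasure D]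
    {m : ℕ} (hm : 1 ≤ m) (δ : ℝ) (hδ : δ ∈ Set.Ioo (0 : ℝ) 1)
    (r : ℝ) (hr : 0 < r)
    (C : Finset (NEApprox N A)) (hC : C.Nonempty) (K : ℕ) (hK : C.card = K)
    (hcover : Covers r C H)
    (hsupmeas : Measurable fun S : Fin m → GameUtil N A =>
      sSup ((fun h : NEApprox N A => trueRisk D h - empRisk S h) '' H)) :
    ENNReal.ofReal (1 - δ) ≤
      (MeasureTheory.Measure.pi fun _ : Fin m => D)
        {S : Fin m → GameUtil N A | ∀ h ∈ H,
          trueRisk D h - empRisk S h ≤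
            2 * (Real.sqrt (2 * Real.log K / m) + 2 * r) +
              4 * Real.sqrt (2 * Real.log (4 / δ) / m)} := by
  classical
  have hm0 : (0:ℝ) < m := by exact_mod_cast hm
  obtain ⟨t, htdef⟩ : ∃ t : ℝ, t = 2 * Real.sqrt (2 * Real.log K / m)
      + 4 * Real.sqrt (2 * Real.log (4 / δ) / m) := ⟨_, rfl⟩
  have hbound : 2 * (Real.sqrt (2 * Real.log K / m) + 2 * r)
      + 4 * Real.sqrt (2 * Real.log (4 / δ) / m) = t + 4 * r := by rw [htdef]; ring
  by_cases ht2 : 2 ≤ t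
  · have hset : {S : Fin m → GameUtil N A | ∀ h ∈ H,
        trueRisk D h - empRisk S h ≤
          2 * (Real.sqrt (2 * Real.log K / m) + 2 * r)
            + 4 * Real.sqrt (2 * Real.log (4 / δ) / m)} = Set.univ := by
      refine Set.eq_univ_of_forall fun S => ?_
      intro h hh
      have h1 := (abs_le.1 (trueRisk_abs_le D h)).2
      have h2 := (empRisk_mem hm S h).1
      rw [hbound]
      linarith [hr.le]
    rw [hset]
    simp only [measure_univ]
    exact ENNReal.ofReal_le_one.2 (by linarith [hδ.1])
  push_neg at ht2
  have hK1 : 1 ≤ K := by rw [← hK]; exact Finset.card_pos.2 hC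
  have hL : 0 < Real.log (4/δ) := Real.log_pos (by rw [lt_div_iff₀ hδ.1]; linarith [hδ.2])
  have hbpos : 0 < Real.sqrt (2 * Real.log (4/δ) / m) := Real.sqrt_pos.2 (by positivity)
  have ht0 : 0 < t := by
    rw [htdef]
    have := Real.sqrt_nonneg (2 * Real.log K / m)
    linarith
  obtain ⟨l, hldef⟩ : ∃ l : ℝ, l = t/4 := ⟨_, rfl⟩
  have hl0 : 0 ≤ l := by rw [hldef]; linarith
  have hl : l ≤ 1/2 := by rw [hldef]; linarith
  -- representatives inside H of the covering set
  set ψ : NEApprox N A → NEApprox N A := fun g =>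
    if hg : ∃ h' ∈ H, ∀ u, dist1 (h'.1 u) (g.1 u) ≤ r then hg.choose else hH.choose with hψdef
  have hψH : ∀ g, ψ g ∈ H := by
    intro g
    rw [hψdef]
    by_cases hg : ∃ h' ∈ H, ∀ u, dist1 (h'.1 u) (g.1 u) ≤ r
    · simp only [dif_pos hg]; exact hg.choose_spec.1
    · simp only [dif_neg hg]; exact hH.choose_spec
  have hψd : ∀ h ∈ H, ∀ g, (∀ u, dist1 (h.1 u) (g.1 u) ≤ r) →
      ∀ u, dist1 (h.1 u) ((ψ g).1 u) ≤ 2 * r := by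
    intro h hh g hgr u
    have hex : ∃ h' ∈ H, ∀ u, dist1 (h'.1 u) (g.1 u) ≤ r := ⟨h, hh, hgr⟩
    rw [hψdef]
    simp only [dif_pos hex]
    calc dist1 (h.1 u) (hex.choose.1 u)
        ≤ dist1 (h.1 u) (g.1 u) + dist1 (g.1 u) (hex.choose.1 u) := dist1_triangle _ _ _
      _ ≤ r + r := add_le_add (hgr u) (by rw [dist1_symm]; exact hex.choose_spec.2 u)
      _ = 2 * r := by ring
  set ν := MeasureTheory.Measure.pi fun _ : Fin m => D with hνdef
  haveI : IsProbabilityMeasure ν := by rw [hνdef]; infer_instance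
  set Bad : NEApprox N A → Set (Fin m → GameUtil N A) :=
    fun g => {S | t < trueRisk D g - empRisk S g} with hBaddef
  have hBadmeas : ∀ g, g ∈ H → MeasurableSet (Bad g) := by
    intro g hg
    exact measurableSet_lt measurable_const
      (measurable_const.sub (empRisk_measurable D g (hHmeas g hg)))
  set B := ⋃ g ∈ C, Bad (ψ g) with hBdef
  have hBmeas : MeasurableSet B := by
    rw [hBdef]
    exact C.measurableSet_biUnion fun g _ => hBadmeas (ψ g) (hψH g)
  have hνBad : ∀ g ∈ C, ν (Bad (ψ g))
      ≤ ENNReal.ofReal (Real.exp ((m:ℝ) * l ^ 2 - l * ((m:ℝ) * t))) := by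
    intro g _
    rw [hνdef, hBaddef]
    exact chernoff_bound D (ψ g) (hHmeas _ (hψH g)) hm hl0 hl
  have hνB : ν B ≤ ENNReal.ofReal δ := by
    rw [hBdef]
    refine le_trans (measure_biUnion_finset_le C _) ?_
    calc ∑ g ∈ C, ν (Bad (ψ g))
        ≤ ∑ _g ∈ C, ENNReal.ofReal (Real.exp ((m:ℝ) * l ^ 2 - l * ((m:ℝ) * t))) :=
          Finset.sum_le_sum hνBad
      _ = (K : ENNReal) * ENNReal.ofReal (Real.exp ((m:ℝ) * l ^ 2 - l * ((m:ℝ) * t))) := by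
          rw [Finset.sum_const, hK, nsmul_eq_mul]
      _ ≤ ENNReal.ofReal δ := by
          rw [← ENNReal.ofReal_natCast K, ← ENNReal.ofReal_mul (by positivity)]
          refine ENNReal.ofReal_le_ofReal ?_
          have := final_arith hK1 hm hδ.1 hδ.2 htdef
          rw [hldef]
          exact this
  have hsub : Bᶜ ⊆ {S : Fin m → GameUtil N A | ∀ h ∈ H,
      trueRisk D h - empRisk S h ≤
        2 * (Real.sqrt (2 * Real.log K / m) + 2 * r)
          + 4 * Real.sqrt (2 * Real.log (4 / δ) / m)} := by
    intro S hS h hh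
    obtain ⟨g, hgC, hgr⟩ := hcover h hh
    have hd := hψd h hh g hgr
    have hnot : S ∉ Bad (ψ g) := fun hmem => hS (Set.mem_biUnion hgC hmem)
    have hle : trueRisk D (ψ g) - empRisk S (ψ g) ≤ t := not_lt.1 hnot
    have hinth : Integrable (nashLoss h) D :=
      integrable_of_bounded D (hHmeas h hh) (abs_nashLoss_le h)
    have hintψ : Integrable (nashLoss (ψ g)) D :=
      integrable_of_bounded D (hHmeas _ (hψH g)) (abs_nashLoss_le _)
    have hptw : ∀ u, |nashLoss h u - nashLoss (ψ g) u| ≤ 2 * r := fun u =>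
      nashLoss_lipschitz h (ψ g) u hd
    have htrd : |trueRisk D h - trueRisk D (ψ g)| ≤ 2 * r := by
      have h1 : |∫ u, (nashLoss h u - nashLoss (ψ g) u) ∂D| ≤ 2 * r :=
        abs_integral_le D (by positivity) hptw
      rw [integral_sub hinth hintψ] at h1
      exact h1
    have hempd : |empRisk S h - empRisk S (ψ g)| ≤ 2 * r := by
      unfold empRisk
      rw [← mul_sub, ← Finset.sum_sub_distrib, abs_mul,
        abs_of_nonneg (by positivity : (0:ℝ) ≤ 1/(m:ℝ))]
      calc (1/(m:ℝ)) * |∑ j, (nashLoss h (S j) - nashLoss (ψ g) (S j))|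
          ≤ (1/(m:ℝ)) * ∑ j, |nashLoss h (S j) - nashLoss (ψ g) (S j)| :=
            mul_le_mul_of_nonneg_left (Finset.abs_sum_le_sum_abs _ _) (by positivity)
        _ ≤ (1/(m:ℝ)) * ∑ _j : Fin m, 2 * r :=
            mul_le_mul_of_nonneg_left (Finset.sum_le_sum fun j _ => hptw (S j)) (by positivity)
        _ = 2 * r := by
            rw [Finset.sum_const, Finset.card_univ, Fintype.card_fin, nsmul_eq_mul]
            field_simp
    rw [hbound]
    have e1 := (abs_le.1 htrd).2
    have e2 := (abs_le.1 hempd).1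
    linarith
  calc ENNReal.ofReal (1 - δ) = 1 - ENNReal.ofReal δ := by
        rw [← ENNReal.ofReal_one, ← ENNReal.ofReal_sub _ hδ.1.le]
    _ ≤ 1 - ν B := tsub_le_tsub_left hνB 1
    _ = ν Bᶜ := (prob_compl_eq_one_sub hBmeas).symm
    _ ≤ _ := measure_mono hsub
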